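/- arXiv:0704.3603 — 4 statements merged into one kernel-verified Lean document; each statement's English description precedes it below -/
import Mathlib

section
/- Let T be a finite rooted tree in which every simple path starting at the root has total degree sum at most m (i.e., summing the degrees d_v over vertices v on the path gives at most m). If T is spherically symmetric with root degree d_0 and every vertex at distance i from the root having degree d_i, then the number of vertices at distance a from the root equals d_0 * ∏_{i=1}^{a-1} (d_i - 1), and this is at most ((m - a + 1)/a)^a. -/
open SimpleGraph Finset

set_option linter.unusedSectionVars false

namespace Stmt0Aux

variable {V : Type} [Fintype V] [DecidableEq V]
variable {G : SimpleGraph V} [DecidableRel G.Adj]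

lemma path_length_eq_dist (hT : G.IsTree) {r u : V} {p : G.Walk r u} (hp : p.IsPath) :
    p.length = G.dist r u := by
  obtain ⟨q, hq, hql⟩ := hT.isConnected.exists_path_of_dist r u
  rw [(hT.existsUnique_path r u).unique hp hq]
  exact hql

lemma isPath_concat' {r u v : V} {p : G.Walk r u} (hp : p.IsPath) (h : G.Adj u v)
    (hv : v ∉ p.support) : (p.concat h).IsPath := by
  rw [SimpleGraph.Walk.isPath_def] at hp ⊢
  rw [SimpleGraph.Walk.support_concat]
  simp [List.concat_eq_append, List.nodup_append, hp, hv]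
  exact fun a ha hav => hv (hav ▸ ha)

lemma single_isPath {u v : V} (h : G.Adj u v) : (Walk.cons h Walk.nil : G.Walk u v).IsPath := by
  simp [SimpleGraph.Walk.isPath_def, h.ne]

lemma adj_dist (hT : G.IsTree) (r : V) {u v : V} (h : G.Adj u v) :
    G.dist r v = G.dist r u + 1 ∨ G.dist r u = G.dist r v + 1 := by
  obtain ⟨p, hp, -⟩ := hT.existsUnique_path r u
  by_cases hv : v ∈ p.support
  · right
    have hdrop : p.dropUntil v hv = Walk.cons h.symm Walk.nil :=
      (hT.existsUnique_path v u).unique (hp.dropUntil hv) (single_isPath h.symm)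
    have hspec := p.take_spec hv
    have hlen := congr_arg Walk.length hspec
    rw [Walk.length_append, hdrop] at hlen
    simp only [Walk.length_cons, Walk.length_nil] at hlen
    rw [← path_length_eq_dist hT hp, ← path_length_eq_dist hT (hp.takeUntil hv)]
    omega
  · left
    have := path_length_eq_dist hT (isPath_concat' hp h hv)
    rw [Walk.length_concat] at this
    rw [← this, path_length_eq_dist hT hp]

lemma parent_mem_take (hT : G.IsTree) (r : V) {u v : V} (h : G.Adj v u)
    (hd : G.dist r v + 1 = G.dist r u) (p : G.Walk r u) (hp : p.IsPath) :
    ∃ hmem : v ∈ p.support, p = (p.takeUntil v hmem).concat h := by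
  by_cases hv : v ∈ p.support
  · refine ⟨hv, ?_⟩
    have hdrop : p.dropUntil v hv = Walk.cons h Walk.nil :=
      (hT.existsUnique_path v u).unique (hp.dropUntil hv) (single_isPath h)
    conv_lhs => rw [← p.take_spec hv]
    rw [hdrop, Walk.concat_eq_append]
  · exfalso
    have : (p.concat h.symm).IsPath := isPath_concat' hp h.symm hv
    have hlen := path_length_eq_dist hT this
    rw [Walk.length_concat, path_length_eq_dist hT hp] at hlen
    omega

lemma parent_unique (hT : G.IsTree) (r : V) {u v w : V} (hv : G.Adj v u) (hw : G.Adj w u)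
    (hdv : G.dist r v + 1 = G.dist r u) (hdw : G.dist r w + 1 = G.dist r u) : v = w := by
  obtain ⟨p, hp, -⟩ := hT.existsUnique_path r u
  obtain ⟨hmv, hv'⟩ := parent_mem_take hT r hv hdv p hp
  obtain ⟨hmw, hw'⟩ := parent_mem_take hT r hw hdw p hp
  obtain ⟨hveq, -⟩ := Walk.concat_inj (hv'.symm.trans hw')
  exact hveq

lemma exists_parent (hT : G.IsTree) (r : V) {u : V} (hu : G.dist r u ≠ 0) :
    ∃ v, G.Adj v u ∧ G.dist r v + 1 = G.dist r u := by
  obtain ⟨p, hp, -⟩ := hT.existsUnique_path r u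
  have hlen := path_length_eq_dist hT hp
  cases p with
  | nil => simp at hu
  | cons h q =>
    obtain ⟨x, q', h', heq⟩ := Walk.exists_cons_eq_concat h q
    have hq' : q'.IsPath := by
      rw [heq, Walk.concat_eq_append] at hp
      exact hp.of_append_left
    refine ⟨x, h', ?_⟩
    have hlen2 := congr_arg Walk.length heq
    rw [Walk.length_concat] at hlen2
    rw [← path_length_eq_dist hT hq', ← hlen, hlen2]

/-- children of `v` at level `k+1` -/
noncomputable def children (G : SimpleGraph V) [DecidableRel G.Adj] (r v : V) (k : ℕ) : Finset V :=
  (G.neighborFinset v).filter (fun u => G.dist r u = k + 1)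

lemma children_root (hT : G.IsTree) (r : V) :
    children G r r 0 = G.neighborFinset r := by
  apply Finset.filter_true_of_mem
  intro u hu
  rw [mem_neighborFinset] at hu
  rcases adj_dist hT r hu with h | h
  · rw [h, SimpleGraph.dist_self]
  · rw [SimpleGraph.dist_self] at h; omega

lemma card_children (hT : G.IsTree) (r v : V) {k : ℕ} (hk : 0 < k) (hv : G.dist r v = k) :
    (children G r v k).card = G.degree v - 1 := by
  classical
  have key : ∀ u ∈ G.neighborFinset v, G.dist r u = k + 1 ∨ G.dist r u + 1 = k := by
    intro u hu
    rw [mem_neighborFinset] at hu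
    rcases adj_dist hT r hu with h | h
    · left; rw [h, hv]
    · right; omega
  have hP : ((G.neighborFinset v).filter (fun u => G.dist r u + 1 = k)).card = 1 := by
    obtain ⟨w, hw, hwd⟩ := exists_parent hT r (u := v) (by omega)
    rw [Finset.card_eq_one]
    refine ⟨w, ?_⟩
    ext x
    simp only [Finset.mem_filter, mem_neighborFinset, Finset.mem_singleton]
    constructor
    · rintro ⟨hadj, hd⟩
      exact parent_unique hT r hadj.symm hw (by omega) (by omega)
    · rintro rfl
      exact ⟨hw.symm, by omega⟩
  have hC : children G r v k = G.neighborFinset v \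
      ((G.neighborFinset v).filter (fun u => G.dist r u + 1 = k)) := by
    ext x
    simp only [children, Finset.mem_filter, Finset.mem_sdiff, mem_neighborFinset]
    constructor
    · rintro ⟨hadj, hd⟩
      exact ⟨hadj, by rintro ⟨-, h2⟩; omega⟩
    · rintro ⟨hadj, h2⟩
      refine ⟨hadj, ?_⟩
      rcases key x (by rwa [mem_neighborFinset]) with h | h
      · exact h
      · exact absurd ⟨hadj, h⟩ h2
  rw [hC, Finset.card_sdiff_of_subset (Finset.filter_subset _ _), hP, card_neighborFinset_eq_degree]

lemma sphere_succ (hT : G.IsTree) (r : V) (k : ℕ) :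
    (Finset.univ.filter (fun u : V => G.dist r u = k + 1)) =
      (Finset.univ.filter (fun u : V => G.dist r u = k)).biUnion
        (fun v => children G r v k) := by
  ext u
  simp only [Finset.mem_filter, Finset.mem_univ, true_and, Finset.mem_biUnion, children,
    mem_neighborFinset]
  constructor
  · intro hd
    obtain ⟨v, hadj, hvd⟩ := exists_parent hT r (u := u) (by omega)
    exact ⟨v, by omega, hadj, hd⟩
  · rintro ⟨v, -, -, hd⟩
    exact hd

lemma card_sphere_succ (hT : G.IsTree) (r : V) (k : ℕ) :
    (Finset.univ.filter (fun u : V => G.dist r u = k + 1)).card =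
      ∑ v ∈ Finset.univ.filter (fun u : V => G.dist r u = k), (children G r v k).card := by
  rw [sphere_succ hT r k]
  apply Finset.card_biUnion
  intro x hx y hy hxy
  simp only [Finset.mem_coe, Finset.mem_filter] at hx hy
  rw [Function.onFun, Finset.disjoint_left]
  intro u hux huy
  simp only [children, Finset.mem_filter, mem_neighborFinset] at hux huy
  exact hxy (parent_unique hT r hux.1 huy.1 (by omega) (by omega))

lemma sum_support_deg (hT : G.IsTree) {r : V} (d : ℕ → ℕ)
    (hd : ∀ u, G.degree u = d (G.dist r u)) :
    ∀ (n : ℕ) {u : V} (p : G.Walk r u), p.IsPath → p.length = n →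
    (p.support.map (fun x => G.degree x)).sum = ∑ i ∈ Finset.range (n + 1), d i := by
  intro n
  induction n with
  | zero =>
    intro u p hp hlen
    have hnil : p.Nil := Walk.nil_iff_length_eq.mpr hlen
    rw [Walk.nil_iff_support_eq] at hnil
    rw [hnil]
    simp [hd r, SimpleGraph.dist_self]
  | succ n ih =>
    intro u p hp hlen
    cases p with
    | nil => simp at hlen
    | cons h q =>
      obtain ⟨x, q', h', heq⟩ := Walk.exists_cons_eq_concat h q
      rw [heq] at hp hlen ⊢
      have hq' : q'.IsPath := by
        rw [Walk.concat_eq_append] at hp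
        exact hp.of_append_left
      rw [Walk.length_concat] at hlen
      have hq'len : q'.length = n := by omega
      have hdist : G.dist r u = n + 1 := by
        rw [← path_length_eq_dist hT hp, Walk.length_concat]
        omega
      rw [Walk.support_concat, List.map_append, List.sum_append]
      rw [ih q' hq' hq'len]
      simp [hd u, hdist, Finset.sum_range_succ]

lemma amgm {n : ℕ} (hn : 0 < n) (z : ℕ → ℝ) (hz : ∀ i ∈ Finset.range n, 0 ≤ z i) :
    ∏ i ∈ Finset.range n, z i ≤ ((∑ i ∈ Finset.range n, z i) / n) ^ n := by
  have hw : ∀ i ∈ Finset.range n, (0:ℝ) ≤ 1 := fun _ _ => zero_le_one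
  have hw' : (0:ℝ) < ∑ _i ∈ Finset.range n, (1:ℝ) := by
    simp [Finset.sum_const]
    positivity
  have h := Real.geom_mean_le_arith_mean (Finset.range n) (fun _ => (1:ℝ)) z hw hw' hz
  simp only [Real.rpow_one, one_mul, Finset.sum_const, Finset.card_range, nsmul_eq_mul,
    mul_one] at h
  have hprod : (0:ℝ) ≤ ∏ i ∈ Finset.range n, z i := Finset.prod_nonneg hz
  have h2 := pow_le_pow_left₀ (Real.rpow_nonneg hprod _) h n
  rwa [← Real.rpow_natCast ((∏ i ∈ Finset.range n, z i) ^ ((n:ℝ))⁻¹) n,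
    ← Real.rpow_mul hprod, inv_mul_cancel₀ (by positivity : (n:ℝ) ≠ 0),
    Real.rpow_one] at h2

end Stmt0Aux

open Stmt0Aux

/-- In a finite rooted tree where every simple path from the root has
vertex-degree sum at most `m`, if the tree is spherically symmetric with degree `d i`
at distance `i` from the root, then the sphere at distance `a` has exactly
`d 0 * ∏_{i=1}^{a-1} (d i - 1)` vertices, and this is at most `((m - a + 1)/a)^a`. -/
theorem stmt0 {V : Type} [Fintype V] [DecidableEq V]
    (G : SimpleGraph V) [DecidableRel G.Adj] (hT : G.IsTree)
    (r : V) (a m : ℕ) (ha : 0 < a)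
    (hheight : ∃ u, G.dist r u = a)
    (hpath : ∀ (u : V) (p : G.Walk r u), p.IsPath →
      (p.support.map (fun x => G.degree x)).sum ≤ m)
    (d : ℕ → ℕ) (hsym : ∀ u : V, G.degree u = d (G.dist r u)) :
    (Finset.univ.filter (fun u : V => G.dist r u = a)).card
      = d 0 * ∏ i ∈ Finset.Icc 1 (a - 1), (d i - 1) ∧
    ((Finset.univ.filter (fun u : V => G.dist r u = a)).card : ℝ)
      ≤ (((m : ℝ) - a + 1) / a) ^ a := by
  obtain ⟨u₀, hu₀⟩ := hheight
  -- sphere 0 is {r}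
  have hsphere0 : (Finset.univ.filter (fun u : V => G.dist r u = 0)) = {r} := by
    ext x
    simp only [Finset.mem_filter, Finset.mem_univ, true_and, Finset.mem_singleton]
    rw [SimpleGraph.dist_comm, hT.isConnected.dist_eq_zero_iff]
  -- sphere 1 has d 0 elements
  have hcard1 : (Finset.univ.filter (fun u : V => G.dist r u = 1)).card = d 0 := by
    rw [card_sphere_succ hT r 0, hsphere0, Finset.sum_singleton, children_root hT r,
      card_neighborFinset_eq_degree, hsym r, SimpleGraph.dist_self]
  -- recursion for k ≥ 1
  have hstep : ∀ k : ℕ, 0 < k →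
      (Finset.univ.filter (fun u : V => G.dist r u = k + 1)).card =
      (Finset.univ.filter (fun u : V => G.dist r u = k)).card * (d k - 1) := by
    intro k hk
    rw [card_sphere_succ hT r k]
    rw [Finset.sum_congr rfl (fun v hv => ?_), Finset.sum_const, smul_eq_mul]
    simp only [Finset.mem_filter] at hv
    rw [card_children hT r v hk hv.2, hsym v, hv.2]
  -- counting formula for all levels ≥ 1
  have hcount : ∀ b : ℕ, 1 ≤ b →
      (Finset.univ.filter (fun u : V => G.dist r u = b)).card =
        d 0 * ∏ i ∈ Finset.Icc 1 (b - 1), (d i - 1) := by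
    intro b hb
    induction b, hb using Nat.le_induction with
    | base =>
      simpa [show Finset.Icc 1 0 = ∅ from Finset.Icc_eq_empty_of_lt (by omega)] using hcard1
    | succ n hn ih =>
      rw [hstep n hn, ih, Nat.add_sub_cancel]
      obtain ⟨c, rfl⟩ : ∃ c, n = c + 1 := ⟨n - 1, by omega⟩
      rw [Finset.prod_Icc_succ_top (by omega : 1 ≤ c + 1), Nat.add_sub_cancel]
      ring
  have hpart1 := hcount a ha
  refine ⟨hpart1, ?_⟩
  -- spheres nonempty up to level a
  have hne : ∀ j : ℕ, ∃ v, G.dist r v = a - j := by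
    intro j
    induction j with
    | zero => exact ⟨u₀, by simpa using hu₀⟩
    | succ j ih =>
      obtain ⟨v, hv⟩ := ih
      by_cases h0 : a - j = 0
      · exact ⟨r, by rw [SimpleGraph.dist_self]; omega⟩
      · obtain ⟨w, -, hw⟩ := exists_parent hT r (u := v) (by omega)
        exact ⟨w, by omega⟩
  have hnek : ∀ k ≤ a, ∃ v, G.dist r v = k := by
    intro k hk
    obtain ⟨v, hv⟩ := hne (a - k)
    exact ⟨v, by omega⟩
  -- positivity of degrees on levels 1..a
  have hdpos : ∀ k, 1 ≤ k → k ≤ a → 1 ≤ d k := by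
    intro k hk1 hka
    obtain ⟨v, hv⟩ := hnek k hka
    obtain ⟨w, hw, -⟩ := exists_parent hT r (u := v) (by omega)
    have : 0 < G.degree v := G.degree_pos_iff_exists_adj v |>.mpr ⟨w, hw.symm⟩
    rw [hsym v, hv] at this
    omega
  -- degree sum bound along a geodesic to u₀
  have hsum1 : ∑ i ∈ Finset.range (a + 1), d i ≤ m := by
    obtain ⟨p, hp, hplen⟩ := hT.isConnected.exists_path_of_dist r u₀
    rw [hu₀] at hplen
    rw [← sum_support_deg hT d hsym a p hp hplen]
    exact hpath u₀ p hp
  -- rewrite the sum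
  have hsplit : ∑ i ∈ Finset.range (a + 1), d i
      = d 0 + (∑ i ∈ Finset.Icc 1 (a - 1), d i + d a) := by
    rw [Finset.range_eq_Ico, Finset.sum_eq_sum_Ico_succ_bot (by omega)]
    congr 1
    obtain ⟨c, rfl⟩ : ∃ c, a = c + 1 := ⟨a - 1, by omega⟩
    rw [Finset.Ico_add_one_right_eq_Icc, Finset.sum_Icc_succ_top (by omega : 1 ≤ c + 1),
      Nat.add_sub_cancel]
  have hshift : ∑ i ∈ Finset.Icc 1 (a - 1), d i
      = ∑ i ∈ Finset.Icc 1 (a - 1), (d i - 1) + (a - 1) := by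
    have : ∀ i ∈ Finset.Icc 1 (a - 1), d i = (d i - 1) + 1 := by
      intro i hi
      simp only [Finset.mem_Icc] at hi
      have := hdpos i hi.1 (by omega)
      omega
    rw [Finset.sum_congr rfl this, Finset.sum_add_distrib, Finset.sum_const, smul_eq_mul,
      mul_one, Nat.card_Icc]
    omega
  have hda : 1 ≤ d a := hdpos a ha le_rfl
  set S : ℕ := d 0 + ∑ i ∈ Finset.Icc 1 (a - 1), (d i - 1) with hSdef
  have hSm : S + a ≤ m := by omega
  -- real-valued AM-GM
  set z : ℕ → ℝ := fun i => if i = 0 then (d 0 : ℝ) else ((d i - 1 : ℕ) : ℝ) with hz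
  have hznn : ∀ i ∈ Finset.range a, 0 ≤ z i := by
    intro i _
    simp only [hz]
    split <;> positivity
  have h0 : z 0 = (d 0 : ℝ) := by simp [hz]
  have hIco : Finset.Ico 1 a = Finset.Icc 1 (a - 1) := by
    rw [← Finset.Ico_add_one_right_eq_Icc]
    congr 1
    omega
  have hcongr : ∀ i ∈ Finset.Icc 1 (a - 1), z i = ((d i - 1 : ℕ) : ℝ) := by
    intro i hi
    simp only [Finset.mem_Icc] at hi
    simp only [hz, if_neg (show ¬ i = 0 by omega)]
  have hzprod : ∏ i ∈ Finset.range a, z i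
      = (d 0 : ℝ) * ∏ i ∈ Finset.Icc 1 (a - 1), ((d i - 1 : ℕ) : ℝ) := by
    rw [Finset.range_eq_Ico, Finset.prod_eq_prod_Ico_succ_bot (by omega), h0, hIco,
      Finset.prod_congr rfl hcongr]
  have hzsum : ∑ i ∈ Finset.range a, z i = (S : ℝ) := by
    rw [Finset.range_eq_Ico, Finset.sum_eq_sum_Ico_succ_bot (by omega), h0, hIco,
      Finset.sum_congr rfl hcongr, hSdef, Nat.cast_add, Nat.cast_sum]
  have hamgm := amgm ha z hznn
  rw [hzprod, hzsum] at hamgm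
  have hNcast : ((Finset.univ.filter (fun u : V => G.dist r u = a)).card : ℝ)
      = (d 0 : ℝ) * ∏ i ∈ Finset.Icc 1 (a - 1), ((d i - 1 : ℕ) : ℝ) := by
    rw [hpart1]
    push_cast [Nat.cast_prod]
    rfl
  rw [hNcast]
  refine hamgm.trans ?_
  have hSle : (S : ℝ) ≤ (m : ℝ) - a + 1 := by
    have : (S : ℝ) + a ≤ m := by exact_mod_cast hSm
    linarith
  gcongr
end

section
/- Let (Z_r) be a Galton–Watson branching process with offspring distribution Poisson(d), d > 1, started from Z_0 = 1. Then for every t > 0, sup over r of E[exp(t Z_r d^{-r})] is finite. -/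
open MeasureTheory ProbabilityTheory

open scoped ENNReal


-- spectral lemma
lemma GW_lintegral_nat {Ω : Type} [MeasurableSpace Ω] (μ : Measure Ω) (X : Ω → ℕ)
    (hX : Measurable X) (g : ℕ → ℝ≥0∞) :
    ∫⁻ ω, g (X ω) ∂μ = ∑' k, g k * μ {ω | X ω = k} := by
  rw [← lintegral_map (measurable_from_top) hX, lintegral_countable']
  congr 1
  ext k
  rw [Measure.map_apply hX (measurableSet_singleton k)]
  rfl

-- Poisson mgf
lemma GW_mgf {Ω : Type} [MeasurableSpace Ω] (μ : Measure Ω) (d s : ℝ) (hd : 0 < d)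
    (X : Ω → ℕ) (hX : Measurable X)
    (hdist : ∀ k, μ {ω | X ω = k} = ENNReal.ofReal (Real.exp (-d) * d ^ k / (Nat.factorial k))) :
    ∫⁻ ω, ENNReal.ofReal (Real.exp (s * X ω)) ∂μ
      = ENNReal.ofReal (Real.exp (d * (Real.exp s - 1))) := by
  rw [GW_lintegral_nat μ X hX (fun k => ENNReal.ofReal (Real.exp (s * k)))]
  have h1 : ∀ k : ℕ, ENNReal.ofReal (Real.exp (s * k)) * μ {ω | X ω = k}
      = ENNReal.ofReal (Real.exp (-d) * ((d * Real.exp s) ^ k / (Nat.factorial k))) := by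
    intro k
    rw [hdist k, ← ENNReal.ofReal_mul (Real.exp_nonneg _)]
    congr 1
    rw [mul_comm s (k:ℝ), Real.exp_nat_mul]
    rw [mul_pow]
    ring
  simp_rw [h1]
  rw [← ENNReal.ofReal_tsum_of_nonneg]
  · congr 1
    rw [tsum_mul_left]
    have : ∑' k : ℕ, (d * Real.exp s) ^ k / (Nat.factorial k) = Real.exp (d * Real.exp s) := by
      rw [Real.exp_eq_exp_ℝ, NormedSpace.exp_eq_tsum_div]
    rw [this, ← Real.exp_add]
    ring_nf
  · intro k
    positivity
  · exact (Real.summable_pow_div_factorial _).mul_left _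

private lemma psi_nonneg {d : ℝ} (hd : 1 < d) (s : ℝ) (hs : 0 ≤ s) :
    0 ≤ d * (Real.exp s - 1) := by
  have : 1 ≤ Real.exp s := Real.one_le_exp hs
  nlinarith

private lemma psi_iter_nonneg {d : ℝ} (hd : 1 < d) (s : ℝ) (hs : 0 ≤ s) (j : ℕ) :
    0 ≤ (fun x => d * (Real.exp x - 1))^[j] s := by
  induction j with
  | zero => simpa
  | succ j ih =>
    rw [Function.iterate_succ_apply']
    exact psi_nonneg hd _ ih

private lemma psi_le {d : ℝ} (hd : 1 < d) (s : ℝ) (hs : 0 ≤ s) :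
    d * (Real.exp s - 1) ≤ d * (s * Real.exp s) := by
  have h := Real.add_one_le_exp (-s)
  have h2 : Real.exp (-s) * Real.exp s = 1 := by rw [← Real.exp_add]; simp
  have h3 := Real.exp_pos s
  have hd0 : 0 < d := by linarith
  have h4 : (1 - Real.exp (-s)) * Real.exp s ≤ s * Real.exp s :=
    mul_le_mul_of_nonneg_right (by linarith) h3.le
  have h5 : (1 - Real.exp (-s)) * Real.exp s = Real.exp s - 1 := by
    rw [sub_mul, one_mul, h2]
  have h6 : Real.exp s - 1 ≤ s * Real.exp s := by linarith
  exact mul_le_mul_of_nonneg_left h6 hd0.le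

private lemma psi_mono {d : ℝ} (hd : 1 < d) : Monotone (fun s => d * (Real.exp s - 1)) := by
  intro a b hab
  have := Real.exp_le_exp.2 hab
  have hd0 : (0:ℝ) ≤ d := by linarith
  dsimp only
  nlinarith

/-- key small-t bound -/
private lemma small_t {d : ℝ} (hd : 1 < d) (t : ℝ) (ht : 0 ≤ t)
    (hts : Real.exp 1 * t ≤ d - 1) (r : ℕ) :
    (fun s => d * (Real.exp s - 1))^[r] (t * d ^ (-(r:ℤ))) ≤ Real.exp 1 * t := by
  have hd0 : (0:ℝ) < d := by linarith
  have hd1 : (0:ℝ) < d - 1 := by linarith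
  have hM0 : 0 ≤ Real.exp 1 * t := by positivity
  -- formula for partial geometric sums
  have hSform : ∀ j : ℕ, (d - 1) * (∑ i ∈ Finset.range j, (d:ℝ) ^ ((i:ℤ) - (r:ℤ)))
      = d ^ ((j:ℤ) - r) - d ^ (-(r:ℤ)) := by
    intro j
    induction j with
    | zero => simp
    | succ j ih =>
      rw [Finset.sum_range_succ, mul_add, ih]
      have h : (d:ℝ) ^ (((j+1:ℕ):ℤ) - r) = d * d ^ ((j:ℤ) - r) := by
        rw [← zpow_one_add₀ (ne_of_gt hd0)]
        congr 1
        push_cast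
        ring
      rw [h]
      ring
  have hSle : ∀ j : ℕ, j ≤ r →
      (∑ i ∈ Finset.range j, (d:ℝ) ^ ((i:ℤ) - (r:ℤ))) ≤ 1 / (d - 1) := by
    intro j hj
    have h1 : (d:ℝ) ^ ((j:ℤ) - r) ≤ 1 := by
      apply zpow_le_one_of_nonpos₀ (le_of_lt hd)
      omega
    have h2 : (0:ℝ) ≤ d ^ (-(r:ℤ)) := by positivity
    rw [le_div_iff₀ hd1, mul_comm]
    have := hSform j
    linarith
  -- main claim by induction on j
  have main : ∀ j : ℕ, j ≤ r →
      (fun s => d * (Real.exp s - 1))^[j] (t * d ^ (-(r:ℤ)))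
        ≤ t * Real.exp (Real.exp 1 * t * (∑ i ∈ Finset.range j, (d:ℝ) ^ ((i:ℤ) - (r:ℤ))))
            * d ^ ((j:ℤ) - r) := by
    intro j
    induction j with
    | zero =>
      intro _
      simp
    | succ j ih =>
      intro hj1
      have hj : j ≤ r := by omega
      have IH := ih hj
      have haj0 : 0 ≤ (fun s => d * (Real.exp s - 1))^[j] (t * d ^ (-(r:ℤ))) := by
        apply psi_iter_nonneg hd
        positivity
      set a := (fun s => d * (Real.exp s - 1))^[j] (t * d ^ (-(r:ℤ))) with ha
      -- aux bound: a ≤ M * d^(j-r)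
      have hexpS : Real.exp (Real.exp 1 * t * (∑ i ∈ Finset.range j, (d:ℝ) ^ ((i:ℤ) - (r:ℤ))))
          ≤ Real.exp 1 := by
        apply Real.exp_le_exp.2
        calc Real.exp 1 * t * (∑ i ∈ Finset.range j, (d:ℝ) ^ ((i:ℤ) - (r:ℤ)))
            ≤ (d - 1) * (1 / (d-1)) := by
              apply mul_le_mul hts (hSle j hj) ?_ (le_of_lt hd1)
              · -- sum nonneg
                apply Finset.sum_nonneg
                intro i _
                positivity
          _ = 1 := by field_simp
      have haM : a ≤ Real.exp 1 * t * d ^ ((j:ℤ) - r) := by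
        calc a ≤ t * Real.exp (Real.exp 1 * t * (∑ i ∈ Finset.range j, (d:ℝ) ^ ((i:ℤ) - (r:ℤ))))
            * d ^ ((j:ℤ) - r) := IH
          _ ≤ t * Real.exp 1 * d ^ ((j:ℤ) - r) := by
              have hz : (0:ℝ) ≤ d ^ ((j:ℤ) - r) := by positivity
              apply mul_le_mul_of_nonneg_right ?_ hz
              exact mul_le_mul_of_nonneg_left hexpS ht
          _ = Real.exp 1 * t * d ^ ((j:ℤ) - r) := by ring
      rw [Function.iterate_succ_apply', ← ha]
      calc d * (Real.exp a - 1) ≤ d * (a * Real.exp a) := psi_le hd a haj0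
        _ ≤ d * ((t * Real.exp (Real.exp 1 * t * (∑ i ∈ Finset.range j, (d:ℝ) ^ ((i:ℤ) - (r:ℤ))))
              * d ^ ((j:ℤ) - r)) * Real.exp (Real.exp 1 * t * d ^ ((j:ℤ) - r))) := by
            apply mul_le_mul_of_nonneg_left ?_ (le_of_lt hd0)
            apply mul_le_mul IH (Real.exp_le_exp.2 haM) (Real.exp_pos a).le
            positivity
        _ = t * Real.exp (Real.exp 1 * t * (∑ i ∈ Finset.range (j+1), (d:ℝ) ^ ((i:ℤ) - (r:ℤ))))
              * d ^ (((j+1:ℕ):ℤ) - r) := by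
            rw [Finset.sum_range_succ, mul_add, Real.exp_add]
            have h : (d:ℝ) ^ (((j+1:ℕ):ℤ) - r) = d * d ^ ((j:ℤ) - r) := by
              rw [← zpow_one_add₀ (ne_of_gt hd0)]
              congr 1
              push_cast
              ring
            rw [h]
            ring
  have := main r le_rfl
  have hfin : t * Real.exp (Real.exp 1 * t * (∑ i ∈ Finset.range r, (d:ℝ) ^ ((i:ℤ) - (r:ℤ))))
      * d ^ ((r:ℤ) - r) ≤ Real.exp 1 * t := by
    have h0 : (d:ℝ) ^ ((r:ℤ) - r) = 1 := by simp
    rw [h0, mul_one]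
    have hexpS : Real.exp (Real.exp 1 * t * (∑ i ∈ Finset.range r, (d:ℝ) ^ ((i:ℤ) - (r:ℤ))))
        ≤ Real.exp 1 := by
      apply Real.exp_le_exp.2
      calc Real.exp 1 * t * (∑ i ∈ Finset.range r, (d:ℝ) ^ ((i:ℤ) - (r:ℤ)))
          ≤ (d - 1) * (1 / (d-1)) := by
            apply mul_le_mul hts (hSle r le_rfl) ?_ (le_of_lt hd1)
            apply Finset.sum_nonneg
            intro i _
            positivity
        _ = 1 := by field_simp
    calc t * Real.exp (Real.exp 1 * t * (∑ i ∈ Finset.range r, (d:ℝ) ^ ((i:ℤ) - (r:ℤ))))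
        ≤ t * Real.exp 1 := mul_le_mul_of_nonneg_left hexpS ht
      _ = Real.exp 1 * t := by ring
  linarith

private lemma step_up {d : ℝ} (hd : 1 < d) (u B : ℝ)
    (h : ∀ r : ℕ, (fun s => d * (Real.exp s - 1))^[r] (u * d ^ (-(r:ℤ))) ≤ B) :
    ∀ r : ℕ, (fun s => d * (Real.exp s - 1))^[r] ((u * d) * d ^ (-(r:ℤ)))
      ≤ max (u * d) (d * (Real.exp B - 1)) := by
  have hd0 : (0:ℝ) < d := by linarith
  intro r
  cases r with
  | zero =>
    simp only [Function.iterate_zero, id, Nat.cast_zero, neg_zero, zpow_zero, mul_one]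
    exact le_max_left _ _
  | succ r =>
    have harg : (u * d) * d ^ (-((r+1:ℕ):ℤ)) = u * d ^ (-(r:ℤ)) := by
      rw [mul_assoc, ← zpow_one_add₀ (ne_of_gt hd0)]
      congr 2
      push_cast
      ring
    rw [harg, Function.iterate_succ_apply']
    refine le_trans ?_ (le_max_right _ _)
    exact psi_mono hd (h r)

private lemma exists_bound {d : ℝ} (hd : 1 < d) (t : ℝ) (ht : 0 < t) :
    ∃ B : ℝ, ∀ r : ℕ, (fun s => d * (Real.exp s - 1))^[r] (t * d ^ (-(r:ℤ))) ≤ B := by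
  have hd0 : (0:ℝ) < d := by linarith
  have hd1 : (0:ℝ) < d - 1 := by linarith
  obtain ⟨n, hn⟩ := pow_unbounded_of_one_lt (Real.exp 1 * t / (d-1)) hd
  set t₀ : ℝ := t * d ^ (-(n:ℤ)) with ht₀
  have ht₀pos : 0 < t₀ := by positivity
  have hsmall : Real.exp 1 * t₀ ≤ d - 1 := by
    rw [ht₀]
    rw [div_lt_iff₀ hd1] at hn
    have hdn : (0:ℝ) < (d:ℝ) ^ (n:ℕ) := by positivity
    have hzn : (d:ℝ) ^ (-(n:ℤ)) = ((d:ℝ) ^ (n:ℕ))⁻¹ := by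
      rw [zpow_neg, zpow_natCast]
    rw [hzn]
    rw [← mul_assoc]
    rw [mul_inv_le_iff₀ hdn]
    nlinarith
  have base : ∀ r : ℕ, (fun s => d * (Real.exp s - 1))^[r] (t₀ * d ^ (-(r:ℤ)))
      ≤ Real.exp 1 * t₀ := small_t hd t₀ ht₀pos.le hsmall
  have gen : ∀ k : ℕ, ∃ B : ℝ, ∀ r : ℕ,
      (fun s => d * (Real.exp s - 1))^[r] ((t₀ * d ^ (k:ℕ)) * d ^ (-(r:ℤ))) ≤ B := by
    intro k
    induction k with
    | zero => exact ⟨Real.exp 1 * t₀, by simpa using base⟩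
    | succ k ih =>
      obtain ⟨B, hB⟩ := ih
      refine ⟨max ((t₀ * d ^ (k:ℕ)) * d) (d * (Real.exp B - 1)), ?_⟩
      have := step_up hd (t₀ * d ^ (k:ℕ)) B hB
      intro r
      have harg : t₀ * d ^ (k+1:ℕ) = (t₀ * d ^ (k:ℕ)) * d := by
        rw [pow_succ]; ring
      rw [harg]
      exact this r
  obtain ⟨B, hB⟩ := gen n
  refine ⟨B, fun r => ?_⟩
  have harg : t₀ * d ^ (n:ℕ) = t := by
    rw [ht₀, mul_assoc, zpow_neg, zpow_natCast, inv_mul_cancel₀ (by positivity), mul_one]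
  rw [← harg]
  exact hB r

/-- For a Galton–Watson branching process `Z` with Poisson(d) offspring
distribution (`d > 1`), built from an iid array `N` of Poisson(d) variables via
`Z_0 = 1`, `Z_{r+1} = ∑_{i < Z_r} N_{r,i}`, the exponential moments
`E[exp(t Z_r d^{-r})]` are bounded uniformly in `r`, for every `t > 0`. -/
theorem stmt3 {Ω : Type} [MeasurableSpace Ω] (μ : Measure Ω) [IsProbabilityMeasure μ]
    (d : ℝ) (hd : 1 < d)
    (N : ℕ → ℕ → Ω → ℕ)
    (hmeas : ∀ r i, Measurable (N r i))
    (hdist : ∀ r i k, μ {ω | N r i ω = k}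
      = ENNReal.ofReal (Real.exp (-d) * d ^ k / (Nat.factorial k)))
    (hindep : iIndepFun
      (fun p : ℕ × ℕ => N p.1 p.2) μ)
    (Z : ℕ → Ω → ℕ)
    (hZ0 : ∀ ω, Z 0 ω = 1)
    (hZrec : ∀ r ω, Z (r + 1) ω = ∑ i ∈ Finset.range (Z r ω), N r i ω) :
    ∀ t : ℝ, 0 < t → ∃ C : ℝ, ∀ r : ℕ,
      ∫ ω, Real.exp (t * (Z r ω : ℝ) * d ^ (-(r : ℤ))) ∂μ ≤ C := by
  classical
  -- the comap σ-algebras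
  let m' : ℕ × ℕ → MeasurableSpace Ω :=
    fun p => MeasurableSpace.comap (N p.1 p.2) inferInstance
  have hiI : iIndep m' μ := hindep.iIndep
  have hle : ∀ p, m' p ≤ ‹MeasurableSpace Ω› := fun p =>
    measurable_iff_comap_le.1 (hmeas p.1 p.2)
  have hMaster : ∀ S T : Set (ℕ × ℕ), Disjoint S T →
      Indep (⨆ p ∈ S, m' p) (⨆ p ∈ T, m' p) μ := fun S T h =>
    indep_iSup_of_disjoint hle hiI h
  -- σ-algebra of the past
  let G : ℕ → MeasurableSpace Ω := fun r => ⨆ p ∈ {q : ℕ × ℕ | q.1 < r}, m' p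
  let H : ℕ → ℕ → MeasurableSpace Ω := fun r k => ⨆ p ∈ {q : ℕ × ℕ | q.1 = r ∧ q.2 < k}, m' p
  have hGle : ∀ r, G r ≤ ‹MeasurableSpace Ω› := fun r => iSup₂_le fun p _ => hle p
  have hHle : ∀ r k, H r k ≤ ‹MeasurableSpace Ω› := fun r k => iSup₂_le fun p _ => hle p
  have hGmono : ∀ r, G r ≤ G (r + 1) := fun r =>
    biSup_mono (fun q hq => by simp only [Set.mem_setOf_eq] at *; omega)
  have hNG : ∀ r i, Measurable[G (r + 1)] (N r i) := fun r i =>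
    measurable_iff_comap_le.2 (le_iSup₂_of_le (r, i) (by simp) le_rfl)
  have hNH : ∀ r k i, i < k → Measurable[H r k] (N r i) := fun r k i hi =>
    measurable_iff_comap_le.2 (le_iSup₂_of_le (r, i) (by simp [hi]) le_rfl)
  -- Z r is measurable with respect to the past
  have hZG : ∀ r, Measurable[G r] (Z r) := by
    intro r
    induction r with
    | zero =>
      have h : Z 0 = fun _ => 1 := funext hZ0
      rw [h]
      exact @measurable_const ℕ Ω _ (G 0) _
    | succ r ih =>
      apply @measurable_to_countable' ℕ Ω _ _ (G (r + 1)) (Z (r + 1))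
      intro m
      have hset : Z (r + 1) ⁻¹' {m}
          = ⋃ k, ((Z r ⁻¹' {k}) ∩ {ω | (∑ i ∈ Finset.range k, N r i ω) = m}) := by
        ext ω
        simp only [Set.mem_preimage, Set.mem_singleton_iff, Set.mem_iUnion, Set.mem_inter_iff,
          Set.mem_setOf_eq]
        constructor
        · intro h
          exact ⟨Z r ω, rfl, by rw [← hZrec r ω]; exact h⟩
        · rintro ⟨k, hk, hs⟩
          rw [hZrec r ω, hk]
          exact hs
      rw [hset]
      apply MeasurableSet.iUnion
      intro k
      apply MeasurableSet.inter
      · exact hGmono r _ (ih (measurableSet_singleton k))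
      · have hsum : Measurable[G (r + 1)] (fun ω => ∑ i ∈ Finset.range k, N r i ω) :=
          Finset.measurable_sum (Finset.range k) (fun i _ => hNG r i)
        exact hsum (measurableSet_singleton m)
  have hZmeas : ∀ r, Measurable (Z r) := fun r => (hZG r).mono (hGle r) le_rfl
  -- per-variable mgf
  have hNmgf : ∀ (s : ℝ) r i, ∫⁻ ω, ENNReal.ofReal (Real.exp (s * N r i ω)) ∂μ
      = ENNReal.ofReal (Real.exp (d * (Real.exp s - 1))) := fun s r i =>
    GW_mgf μ d s (by linarith) (N r i) (hmeas r i) (hdist r i)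
  -- product of mgf's
  have hprodmeas : ∀ (s : ℝ) r k, Measurable[H r k]
      (fun ω => ∏ i ∈ Finset.range k, ENNReal.ofReal (Real.exp (s * N r i ω))) := by
    intro s r k
    apply Finset.measurable_prod
    intro i hi
    have h1 : Measurable[H r k] (N r i) := hNH r k i (Finset.mem_range.1 hi)
    exact (measurable_from_top (f := fun n : ℕ => ENNReal.ofReal (Real.exp (s * n)))).comp h1
  have hprod : ∀ (s : ℝ) r k,
      ∫⁻ ω, ∏ i ∈ Finset.range k, ENNReal.ofReal (Real.exp (s * N r i ω)) ∂μ
        = ENNReal.ofReal (Real.exp (d * (Real.exp s - 1))) ^ k := by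
    intro s r k
    induction k with
    | zero => simp
    | succ k ih =>
      have hstep : ∀ ω, ∏ i ∈ Finset.range (k+1), ENNReal.ofReal (Real.exp (s * N r i ω))
          = (∏ i ∈ Finset.range k, ENNReal.ofReal (Real.exp (s * N r i ω)))
            * ENNReal.ofReal (Real.exp (s * N r k ω)) := fun ω => Finset.prod_range_succ _ _
      simp_rw [hstep]
      have hdisj : Disjoint {q : ℕ × ℕ | q.1 = r ∧ q.2 < k} ({(r, k)} : Set (ℕ × ℕ)) := by
        rw [Set.disjoint_left]
        rintro ⟨a, b⟩ hab hmem
        simp only [Set.mem_setOf_eq] at hab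
        simp only [Set.mem_singleton_iff, Prod.mk.injEq] at hmem
        omega
      have hind : Indep (H r k) (m' (r, k)) μ :=
        indep_of_indep_of_le_right (hMaster {q : ℕ × ℕ | q.1 = r ∧ q.2 < k} {(r, k)} hdisj)
          (le_iSup₂_of_le (r, k) rfl le_rfl)
      have hg : Measurable[m' (r, k)] (fun ω => ENNReal.ofReal (Real.exp (s * N r k ω))) :=
        (measurable_from_top (f := fun n : ℕ => ENNReal.ofReal (Real.exp (s * n)))).comp
          (measurable_iff_comap_le.2 (le_rfl : m' (r, k) ≤ m' (r, k)))
      have h2 : ∫⁻ ω, (∏ i ∈ Finset.range k, ENNReal.ofReal (Real.exp (s * N r i ω)))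
            * ENNReal.ofReal (Real.exp (s * N r k ω)) ∂μ
          = (∫⁻ ω, ∏ i ∈ Finset.range k, ENNReal.ofReal (Real.exp (s * N r i ω)) ∂μ)
            * ∫⁻ ω, ENNReal.ofReal (Real.exp (s * N r k ω)) ∂μ :=
        lintegral_mul_eq_lintegral_mul_lintegral_of_independent_measurableSpace
          (hHle r k) (hle (r, k)) hind (hprodmeas s r k) hg
      rw [h2, ih, hNmgf s r k, pow_succ]
  -- split by the value of Z r
  have hsplit : ∀ (s : ℝ) r k,
      ∫⁻ ω, Set.indicator (Z r ⁻¹' {k})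
          (fun ω => ∏ i ∈ Finset.range k, ENNReal.ofReal (Real.exp (s * N r i ω))) ω ∂μ
        = μ (Z r ⁻¹' {k}) * ENNReal.ofReal (Real.exp (d * (Real.exp s - 1))) ^ k := by
    intro s r k
    have hpt : ∀ ω, Set.indicator (Z r ⁻¹' {k})
          (fun ω => ∏ i ∈ Finset.range k, ENNReal.ofReal (Real.exp (s * N r i ω))) ω
        = Set.indicator (Z r ⁻¹' {k}) (1 : Ω → ℝ≥0∞) ω
            * ∏ i ∈ Finset.range k, ENNReal.ofReal (Real.exp (s * N r i ω)) := by
      intro ω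
      by_cases hω : ω ∈ Z r ⁻¹' {k}
      · rw [Set.indicator_of_mem hω, Set.indicator_of_mem hω, Pi.one_apply, one_mul]
      · rw [Set.indicator_of_notMem hω, Set.indicator_of_notMem hω, zero_mul]
    simp_rw [hpt]
    have hdisj : Disjoint {q : ℕ × ℕ | q.1 < r} {q : ℕ × ℕ | q.1 = r ∧ q.2 < k} := by
      rw [Set.disjoint_left]
      rintro ⟨a, b⟩ hab hmem
      simp only [Set.mem_setOf_eq] at hab hmem
      omega
    have h2 : ∫⁻ ω, Set.indicator (Z r ⁻¹' {k}) (1 : Ω → ℝ≥0∞) ω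
          * (∏ i ∈ Finset.range k, ENNReal.ofReal (Real.exp (s * N r i ω))) ∂μ
        = (∫⁻ ω, Set.indicator (Z r ⁻¹' {k}) (1 : Ω → ℝ≥0∞) ω ∂μ)
          * ∫⁻ ω, ∏ i ∈ Finset.range k, ENNReal.ofReal (Real.exp (s * N r i ω)) ∂μ :=
      lintegral_mul_eq_lintegral_mul_lintegral_of_independent_measurableSpace
        (hGle r) (hHle r k)
        (hMaster {q : ℕ × ℕ | q.1 < r} {q : ℕ × ℕ | q.1 = r ∧ q.2 < k} hdisj)
        (Measurable.indicator (@measurable_const _ _ _ (G r) _) (hZG r (measurableSet_singleton k)))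
        (hprodmeas s r k)
    rw [h2, hprod s r k, lintegral_indicator_one (hZmeas r (measurableSet_singleton k))]
  -- the recursion for the mgf of Z
  have hrec : ∀ (s : ℝ) r, ∫⁻ ω, ENNReal.ofReal (Real.exp (s * Z (r + 1) ω)) ∂μ
      = ∫⁻ ω, ENNReal.ofReal (Real.exp (d * (Real.exp s - 1) * Z r ω)) ∂μ := by
    intro s r
    have hpt : ∀ ω, ENNReal.ofReal (Real.exp (s * Z (r + 1) ω))
        = ∑' k, Set.indicator (Z r ⁻¹' {k})
            (fun ω => ∏ i ∈ Finset.range k, ENNReal.ofReal (Real.exp (s * N r i ω))) ω := by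
      intro ω
      rw [tsum_eq_single (Z r ω) ?_]
      · rw [Set.indicator_of_mem (show ω ∈ Z r ⁻¹' {Z r ω} from rfl)]
        rw [hZrec r ω]
        have hc : s * ((∑ i ∈ Finset.range (Z r ω), N r i ω : ℕ) : ℝ)
            = ∑ i ∈ Finset.range (Z r ω), s * (N r i ω : ℝ) := by
          push_cast
          rw [Finset.mul_sum]
        rw [hc, Real.exp_sum, ENNReal.ofReal_prod_of_nonneg (fun i _ => Real.exp_nonneg _)]
      · intro k hk
        apply Set.indicator_of_notMem
        simp only [Set.mem_preimage, Set.mem_singleton_iff]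
        exact fun h => hk h.symm
    calc ∫⁻ ω, ENNReal.ofReal (Real.exp (s * Z (r + 1) ω)) ∂μ
        = ∫⁻ ω, ∑' k, Set.indicator (Z r ⁻¹' {k})
            (fun ω => ∏ i ∈ Finset.range k, ENNReal.ofReal (Real.exp (s * N r i ω))) ω ∂μ := by
          simp_rw [hpt]
      _ = ∑' k, ∫⁻ ω, Set.indicator (Z r ⁻¹' {k})
            (fun ω => ∏ i ∈ Finset.range k, ENNReal.ofReal (Real.exp (s * N r i ω))) ω ∂μ := by
          apply lintegral_tsum
          intro k
          apply Measurable.aemeasurable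
          apply Measurable.indicator
          · exact (hprodmeas s r k).mono (hHle r k) le_rfl
          · exact hZmeas r (measurableSet_singleton k)
      _ = ∑' k, μ (Z r ⁻¹' {k}) * ENNReal.ofReal (Real.exp (d * (Real.exp s - 1))) ^ k := by
          simp_rw [hsplit s r]
      _ = ∑' k : ℕ, ENNReal.ofReal (Real.exp (d * (Real.exp s - 1) * (k : ℝ))) * μ {ω | Z r ω = k} := by
          apply tsum_congr
          intro k
          have h1 : ENNReal.ofReal (Real.exp (d * (Real.exp s - 1) * (k : ℝ)))
              = ENNReal.ofReal (Real.exp (d * (Real.exp s - 1))) ^ k := by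
            rw [mul_comm (d * (Real.exp s - 1)) (k : ℝ), Real.exp_nat_mul,
              ENNReal.ofReal_pow (Real.exp_nonneg _)]
          rw [h1, mul_comm]
          rfl
      _ = ∫⁻ ω, ENNReal.ofReal (Real.exp (d * (Real.exp s - 1) * Z r ω)) ∂μ := by
          rw [GW_lintegral_nat μ (Z r) (hZmeas r)
            (fun k => ENNReal.ofReal (Real.exp (d * (Real.exp s - 1) * (k : ℝ))))]
  -- iterate
  have hiter : ∀ r (s : ℝ), ∫⁻ ω, ENNReal.ofReal (Real.exp (s * Z r ω)) ∂μ
      = ENNReal.ofReal (Real.exp ((fun x => d * (Real.exp x - 1))^[r] s)) := by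
    intro r
    induction r with
    | zero =>
      intro s
      simp_rw [hZ0]
      simp [lintegral_const, measure_univ]
    | succ r ih =>
      intro s
      rw [hrec s r, ih (d * (Real.exp s - 1)), Function.iterate_succ_apply]
  -- conclusion
  intro t ht
  obtain ⟨B, hB⟩ := exists_bound hd t ht
  refine ⟨Real.exp B, fun r => ?_⟩
  have hrw : ∀ ω : Ω, t * (Z r ω : ℝ) * d ^ (-(r : ℤ)) = (t * d ^ (-(r : ℤ))) * (Z r ω : ℝ) :=
    fun ω => by ring
  have h1 : ∫ ω, Real.exp (t * (Z r ω : ℝ) * d ^ (-(r : ℤ))) ∂μ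
      = ∫ ω, Real.exp ((t * d ^ (-(r : ℤ))) * (Z r ω : ℝ)) ∂μ := by
    apply integral_congr_ae
    filter_upwards with ω
    rw [hrw]
  rw [h1]
  have hmeasf : Measurable (fun ω => Real.exp ((t * d ^ (-(r : ℤ))) * (Z r ω : ℝ))) := by
    apply Real.measurable_exp.comp
    apply Measurable.const_mul
    exact (measurable_from_top (f := fun n : ℕ => (n : ℝ))).comp (hZmeas r)
  rw [integral_eq_lintegral_of_nonneg_ae
    (Filter.Eventually.of_forall fun ω => Real.exp_nonneg _) hmeasf.aestronglyMeasurable]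
  rw [hiter r (t * d ^ (-(r : ℤ)))]
  rw [ENNReal.toReal_ofReal (Real.exp_nonneg _)]
  exact Real.exp_le_exp.2 (hB r)
end

section
/- Let T be a Galton–Watson tree with offspring distribution N satisfying E[exp(tN)] < ∞ for all t, and let M(r) denote the maximum, over all simple paths from the root in the first r levels of T, of the sum of vertex degrees along the path. Then for every t there is a constant c(t) with exp(c(t)) ≥ E[(1 + K exp(tK))] (K the root degree) such that E[exp(t M(r))] ≤ exp(c(t) r) for all r. -/
open MeasureTheory ProbabilityTheory

lemma stmt4_aux_comp {Ω : Type} {mΩ : MeasurableSpace Ω} {g : Ω → ℕ}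
    (hg : Measurable g) (h : ℕ → Ω → ℕ) (hh : ∀ k, Measurable (h k)) :
    Measurable (fun ω => h (g ω) ω) := by
  apply measurable_to_countable'
  intro n
  have : (fun ω => h (g ω) ω) ⁻¹' {n} = ⋃ k, g ⁻¹' {k} ∩ (h k) ⁻¹' {n} := by
    ext ω
    simp only [Set.mem_preimage, Set.mem_singleton_iff, Set.mem_iUnion, Set.mem_inter_iff]
    exact ⟨fun hn => ⟨g ω, rfl, hn⟩, fun ⟨k, hk, hn⟩ => hk ▸ hn⟩
  rw [this]
  exact MeasurableSet.iUnion fun k =>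
    (hg (measurableSet_singleton k)).inter (hh k (measurableSet_singleton n))

lemma stmt4_aux_sup {Ω : Type} {mΩ : MeasurableSpace Ω} (k : ℕ) (f : ℕ → Ω → ℕ)
    (hf : ∀ i, Measurable (f i)) :
    Measurable (fun ω => (Finset.range k).sup (fun i => f i ω)) := by
  induction k with
  | zero => simp only [Finset.range_zero, Finset.sup_empty]; exact measurable_const
  | succ n ih =>
      have : (fun ω => (Finset.range (n+1)).sup (fun i => f i ω))
          = fun ω => (f n ω) ⊔ ((Finset.range n).sup (fun i => f i ω)) := by
        funext ω; rw [Finset.range_add_one, Finset.sup_insert]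
      rw [this]
      exact stmt4_aux_comp (hf n) (fun j ω => j ⊔ ((Finset.range n).sup (fun i => f i ω)))
        (fun j => (Measurable.of_discrete (f := fun x : ℕ => j ⊔ x)).comp ih)

/-- For a Galton–Watson tree built from an iid array `N` of offspring
variables (indexed by Ulam–Harris labels `List ℕ`) with all exponential moments finite,
let `M r` be the maximal path degree sum over the first `r` levels, satisfying the
recursion `M (r+1) at u = N u + max_{i < N u} M r at (u ++ [i])`, `M 0 = 0`. Then for
every `t` there is `c` with `exp c ≥ E[1 + K exp(t K)]` (`K` the root degree) such that
`E[exp(t M(r))] ≤ exp(c r)` for all `r`. -/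
theorem stmt4 {Ω : Type} [MeasurableSpace Ω] (μ : Measure Ω) [IsProbabilityMeasure μ]
    (N : List ℕ → Ω → ℕ)
    (hmeas : ∀ u, Measurable (N u))
    (hident : ∀ u k, μ {ω | N u ω = k} = μ {ω | N [] ω = k})
    (hindep : iIndepFun N μ)
    (hexp : ∀ t : ℝ, Integrable (fun ω => Real.exp (t * (N [] ω : ℝ))) μ)
    (M : ℕ → List ℕ → Ω → ℕ)
    (hM0 : ∀ u ω, M 0 u ω = 0)
    (hMrec : ∀ r u ω, M (r + 1) u ω
      = N u ω + (Finset.range (N u ω)).sup (fun i => M r (u ++ [i]) ω)) :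
    ∀ t : ℝ, ∃ c : ℝ,
      (∫ ω, (1 + (N ([] : List ℕ) ω : ℝ) * Real.exp (t * (N ([] : List ℕ) ω : ℝ))) ∂μ) ≤ Real.exp c ∧
      ∀ r : ℕ, ∫ ω, Real.exp (t * (M r ([] : List ℕ) ω : ℝ)) ∂μ ≤ Real.exp (c * r) := by
  intro t
  set m' : List ℕ → MeasurableSpace Ω :=
    fun u => MeasurableSpace.comap (N u) inferInstance with hm'
  set mT : Set (List ℕ) → MeasurableSpace Ω := fun T => ⨆ u ∈ T, m' u with hmT
  have hle : ∀ T, mT T ≤ ‹MeasurableSpace Ω› :=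
    fun T => iSup₂_le fun u _ => measurable_iff_comap_le.mp (hmeas u)
  have hmTmono : ∀ {S T : Set (List ℕ)}, S ⊆ T → mT S ≤ mT T :=
    fun hST => biSup_mono hST
  set tree : ℕ → List ℕ → Set (List ℕ) :=
    fun r u => {w | ∃ s : List ℕ, w = u ++ s ∧ s.length < r} with htree
  -- measurability of M r u w.r.t. the σ-algebra of its subtree
  have hMmeasT : ∀ r u, Measurable[mT (tree r u)] (M r u) := by
    intro r
    induction r with
    | zero =>
        intro u
        have : M 0 u = fun _ => 0 := funext (hM0 u)
        rw [this]; exact measurable_const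
    | succ r ih =>
        intro u
        have hu : u ∈ tree (r+1) u := ⟨[], by simp⟩
        have hNu : Measurable[mT (tree (r+1) u)] (N u) :=
          (measurable_iff_comap_le.mpr le_rfl).mono (le_iSup₂ (f := fun u _ => m' u) u hu) le_rfl
        have hMi : ∀ i, Measurable[mT (tree (r+1) u)] (M r (u ++ [i])) := by
          intro i
          refine (ih (u ++ [i])).mono (hmTmono ?_) le_rfl
          rintro w ⟨s, rfl, hs⟩
          exact ⟨i :: s, by simp, by simpa using hs⟩
        have : M (r+1) u = fun ω =>
            (fun k ω' => k + (Finset.range k).sup (fun i => M r (u ++ [i]) ω')) (N u ω) ω :=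
          funext (hMrec r u)
        rw [this]
        exact stmt4_aux_comp (mΩ := mT (tree (r+1) u)) hNu _
          (fun k => (Measurable.of_discrete (f := fun x : ℕ => k + x)).comp
            (stmt4_aux_sup (mΩ := mT (tree (r+1) u)) k _ hMi))
  have hMmeas : ∀ r u, Measurable (M r u) := fun r u => (hMmeasT r u).mono (hle _) le_rfl
  -- independence
  have hIndep : ∀ (u : List ℕ) (r : ℕ) (i : ℕ) (φ : ℕ → ENNReal) (ψ : ℕ → ENNReal),
      IndepFun (fun ω => φ (N u ω)) (fun ω => ψ (M r (u ++ [i]) ω)) μ := by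
    intro u r i φ ψ
    have h_le : ∀ n, m' n ≤ ‹MeasurableSpace Ω› := fun n => measurable_iff_comap_le.mp (hmeas n)
    have hbase := indep_biSup_compl h_le hindep.iIndep ({u}ᶜ)
    rw [compl_compl] at hbase
    have h2 : (⨆ n ∈ ({u} : Set (List ℕ)), m' n) = m' u := by simp
    rw [h2] at hbase
    have hψ : Measurable[mT (tree r (u ++ [i]))] (fun ω => ψ (M r (u ++ [i]) ω)) :=
      (Measurable.of_discrete (f := ψ)).comp (hMmeasT r (u ++ [i]))
    have hsub : mT (tree r (u ++ [i])) ≤ ⨆ n ∈ ({u}ᶜ : Set (List ℕ)), m' n := by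
      apply biSup_mono
      rintro w ⟨s, rfl, -⟩
      simp only [Set.mem_compl_iff, Set.mem_singleton_iff]
      intro h
      have := congrArg List.length h
      simp at this
    have hφ : Measurable[m' u] (fun ω => φ (N u ω)) :=
      (Measurable.of_discrete (f := φ)).comp (measurable_iff_comap_le.mpr le_rfl)
    exact indep_of_indep_of_le_right
      (indep_of_indep_of_le_left hbase.symm (measurable_iff_comap_le.mp hφ))
      (le_trans (measurable_iff_comap_le.mp hψ) hsub)
  -- identical distribution
  have hdist : ∀ (u : List ℕ) (φ : ℕ → ENNReal),
      ∫⁻ ω, φ (N u ω) ∂μ = ∫⁻ ω, φ (N [] ω) ∂μ := by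
    intro u φ
    have h1 : ∀ v : List ℕ, ∫⁻ ω, φ (N v ω) ∂μ = ∑' k, φ k * μ {ω | N v ω = k} := by
      intro v
      rw [← lintegral_map (Measurable.of_discrete (f := φ)) (hmeas v), lintegral_countable']
      congr 1
      funext k
      rw [Measure.map_apply (hmeas v) (measurableSet_singleton k)]
      rfl
    rw [h1 u, h1 []]
    congr 1
    funext k
    rw [hident u k]
  -- integrability of K * exp(t K)
  have hKmeas : Measurable (fun ω => (N [] ω : ℝ) * Real.exp (t * (N [] ω : ℝ))) :=
    (Measurable.of_discrete (f := fun k : ℕ => (k : ℝ) * Real.exp (t * (k : ℝ)))).comp (hmeas [])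
  have hKexp : Integrable (fun ω => (N [] ω : ℝ) * Real.exp (t * (N [] ω : ℝ))) μ := by
    refine Integrable.mono (hexp (t + 1)) hKmeas.aestronglyMeasurable ?_
    filter_upwards with ω
    rw [Real.norm_eq_abs, Real.norm_eq_abs, abs_of_nonneg (by positivity),
      abs_of_nonneg (Real.exp_pos _).le]
    set x := (N [] ω : ℝ) with hx
    have hxnn : 0 ≤ x := by rw [hx]; positivity
    calc x * Real.exp (t * x) ≤ Real.exp x * Real.exp (t * x) := by
          have : x ≤ Real.exp x := by have := Real.add_one_le_exp x; linarith
          exact mul_le_mul_of_nonneg_right this (Real.exp_pos _).le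
      _ = Real.exp ((t + 1) * x) := by rw [← Real.exp_add]; ring_nf
  have hJnn : 0 ≤ ∫ ω, (N [] ω : ℝ) * Real.exp (t * (N [] ω : ℝ)) ∂μ :=
    integral_nonneg fun ω => by positivity
  set J : ℝ := ∫ ω, (N [] ω : ℝ) * Real.exp (t * (N [] ω : ℝ)) ∂μ with hJ
  have hI1 : (∫ ω, (1 + (N ([] : List ℕ) ω : ℝ) * Real.exp (t * (N ([] : List ℕ) ω : ℝ))) ∂μ)
      = 1 + J := by
    rw [integral_add (integrable_const 1) hKexp, integral_const]
    simp
    exact hJ.symm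
  have hIpos : (0:ℝ) < 1 + J := by linarith
  refine ⟨Real.log (1 + J), ?_, ?_⟩
  · rw [hI1, Real.exp_log hIpos]
  -- the lintegral bound by induction
  set A : ENNReal := ENNReal.ofReal (1 + J) with hA'
  set B : ENNReal := ∫⁻ ω, ENNReal.ofReal ((N [] ω : ℝ) * Real.exp (t * (N [] ω : ℝ))) ∂μ with hB'
  have hB : B = ENNReal.ofReal J := by
    rw [hB', hJ, ofReal_integral_eq_lintegral_ofReal hKexp
      (Filter.Eventually.of_forall fun ω => by positivity)]
  have hA : A = 1 + B := by
    rw [hA', ENNReal.ofReal_add zero_le_one hJnn, ENNReal.ofReal_one, hB]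
  have hA1 : (1:ENNReal) ≤ A := by
    rw [hA']
    exact ENNReal.one_le_ofReal.mpr (by linarith)
  have key : ∀ (r : ℕ) (u : List ℕ),
      ∫⁻ ω, ENNReal.ofReal (Real.exp (t * (M r u ω : ℝ))) ∂μ ≤ A ^ r := by
    intro r
    induction r with
    | zero =>
        intro u
        simp only [hM0, Nat.cast_zero, mul_zero, Real.exp_zero, ENNReal.ofReal_one,
          lintegral_one, measure_univ, pow_zero, le_refl]
    | succ r ih =>
        intro u
        set φ : ℕ → ℕ → ENNReal := fun i k =>
          if i < k then ENNReal.ofReal (Real.exp (t * (k : ℝ))) else 0 with hφ'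
        set ψ : ℕ → Ω → ENNReal := fun i ω =>
          ENNReal.ofReal (Real.exp (t * (M r (u ++ [i]) ω : ℝ))) with hψ'
        have hpt : ∀ ω, ENNReal.ofReal (Real.exp (t * (M (r+1) u ω : ℝ)))
            ≤ 1 + ∑' i, φ i (N u ω) * ψ i ω := by
          intro ω
          rw [hMrec r u ω]
          rcases Nat.eq_zero_or_pos (N u ω) with h0 | hpos
          · rw [h0]
            simp only [Finset.range_zero, Finset.sup_empty, bot_eq_zero', Nat.zero_add,
              Nat.cast_zero, mul_zero, Real.exp_zero, ENNReal.ofReal_one]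
            exact le_add_right le_rfl
          · obtain ⟨j, hj, hsup⟩ := Finset.exists_mem_eq_sup (Finset.range (N u ω))
              ⟨0, Finset.mem_range.mpr hpos⟩ (fun i => M r (u ++ [i]) ω)
            have hjlt := Finset.mem_range.mp hj
            have heq : ENNReal.ofReal (Real.exp (t *
                ((N u ω + (Finset.range (N u ω)).sup fun i => M r (u ++ [i]) ω : ℕ) : ℝ)))
                = φ j (N u ω) * ψ j ω := by
              rw [hsup, hφ', hψ']
              simp only [if_pos hjlt]
              rw [← ENNReal.ofReal_mul (Real.exp_pos _).le, ← Real.exp_add]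
              congr 2
              push_cast
              ring
            calc ENNReal.ofReal (Real.exp (t *
                ((N u ω + (Finset.range (N u ω)).sup fun i => M r (u ++ [i]) ω : ℕ) : ℝ)))
                = φ j (N u ω) * ψ j ω := heq
              _ ≤ ∑' i, φ i (N u ω) * ψ i ω := ENNReal.le_tsum j
              _ ≤ 1 + ∑' i, φ i (N u ω) * ψ i ω := le_add_self
        have hφmeas : ∀ i, Measurable (fun ω => φ i (N u ω)) :=
          fun i => (Measurable.of_discrete (f := φ i)).comp (hmeas u)
        have hψmeas : ∀ i, Measurable (ψ i) :=
          fun i => (Measurable.of_discrete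
            (f := fun k : ℕ => ENNReal.ofReal (Real.exp (t * (k : ℝ))))).comp (hMmeas r (u ++ [i]))
        have hsum : ∀ k : ℕ, ∑' i, φ i k = ENNReal.ofReal ((k : ℝ) * Real.exp (t * (k : ℝ))) := by
          intro k
          rw [tsum_eq_sum (s := Finset.range k) (fun i hi => if_neg (by simpa using hi))]
          rw [Finset.sum_congr rfl (fun i hi => if_pos (Finset.mem_range.mp hi))]
          rw [Finset.sum_const, Finset.card_range, nsmul_eq_mul,
            ENNReal.ofReal_mul (Nat.cast_nonneg k), ENNReal.ofReal_natCast]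
        calc ∫⁻ ω, ENNReal.ofReal (Real.exp (t * (M (r+1) u ω : ℝ))) ∂μ
            ≤ ∫⁻ ω, (1 + ∑' i, φ i (N u ω) * ψ i ω) ∂μ := lintegral_mono hpt
          _ = 1 + ∑' i, ∫⁻ ω, φ i (N u ω) * ψ i ω ∂μ := by
              rw [lintegral_add_left measurable_const, lintegral_one, measure_univ,
                lintegral_tsum (f := fun i ω => φ i (N u ω) * ψ i ω) (fun i => ((hφmeas i).mul (hψmeas i)).aemeasurable)]
          _ ≤ 1 + ∑' i, (∫⁻ ω, φ i (N u ω) ∂μ) * A ^ r := by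
              refine add_le_add_right (ENNReal.tsum_le_tsum fun i => ?_) 1
              calc ∫⁻ ω, φ i (N u ω) * ψ i ω ∂μ
                  = (∫⁻ ω, φ i (N u ω) ∂μ) * ∫⁻ ω, ψ i ω ∂μ :=
                    lintegral_mul_eq_lintegral_mul_lintegral_of_indepFun (hφmeas i) (hψmeas i)
                      (hIndep u r i (φ i) (fun k => ENNReal.ofReal (Real.exp (t * (k : ℝ)))))
                _ ≤ (∫⁻ ω, φ i (N u ω) ∂μ) * A ^ r := mul_le_mul_right (ih (u ++ [i])) _
          _ = 1 + (∫⁻ ω, ∑' i, φ i (N u ω) ∂μ) * A ^ r := by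
              rw [ENNReal.tsum_mul_right, ← lintegral_tsum (fun i => (hφmeas i).aemeasurable)]
          _ = 1 + B * A ^ r := by
              congr 2
              have heq2 : (fun ω => ∑' i, φ i (N u ω))
                  = fun ω => ENNReal.ofReal ((N u ω : ℝ) * Real.exp (t * (N u ω : ℝ))) :=
                funext fun ω => hsum (N u ω)
              rw [heq2]
              exact hdist u (fun k => ENNReal.ofReal ((k : ℝ) * Real.exp (t * (k : ℝ))))
          _ ≤ A ^ (r + 1) := by
              have h1r : (1 : ENNReal) ≤ A ^ r := one_le_pow_of_one_le' hA1 r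
              calc 1 + B * A ^ r ≤ A ^ r + B * A ^ r := add_le_add_left h1r _
                _ = (1 + B) * A ^ r := by rw [add_mul, one_mul]
                _ = A ^ (r + 1) := by rw [← hA, pow_succ, mul_comm]
  -- conclusion
  intro r
  have hfmeas : Measurable (fun ω => Real.exp (t * (M r ([] : List ℕ) ω : ℝ))) :=
    (Measurable.of_discrete (f := fun k : ℕ => Real.exp (t * (k : ℝ)))).comp (hMmeas r ([] : List ℕ))
  have hbound : ∫⁻ ω, ENNReal.ofReal (Real.exp (t * (M r ([] : List ℕ) ω : ℝ))) ∂μ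
      ≤ ENNReal.ofReal (Real.exp (Real.log (1 + J) * r)) := by
    refine le_trans (key r ([] : List ℕ)) ?_
    rw [hA', ← ENNReal.ofReal_pow (by linarith)]
    apply ENNReal.ofReal_le_ofReal
    rw [mul_comm, Real.exp_nat_mul, Real.exp_log hIpos]
  have hfi : Integrable (fun ω => Real.exp (t * (M r ([] : List ℕ) ω : ℝ))) μ := by
    refine ⟨hfmeas.aestronglyMeasurable, ?_⟩
    rw [hasFiniteIntegral_iff_ofReal (Filter.Eventually.of_forall fun ω => (Real.exp_pos _).le)]
    exact lt_of_le_of_lt hbound ENNReal.ofReal_lt_top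
  rw [integral_eq_lintegral_of_nonneg_ae (Filter.Eventually.of_forall fun ω => (Real.exp_pos _).le)
    hfmeas.aestronglyMeasurable]
  calc (∫⁻ ω, ENNReal.ofReal (Real.exp (t * (M r ([] : List ℕ) ω : ℝ))) ∂μ).toReal
      ≤ (ENNReal.ofReal (Real.exp (Real.log (1 + J) * r))).toReal :=
        ENNReal.toReal_mono ENNReal.ofReal_ne_top hbound
    _ = Real.exp (Real.log (1 + J) * r) := ENNReal.toReal_ofReal (Real.exp_pos _).le
end

section
/- Let G be a graph such that for every vertex v, the number of vertices within distance a of v in the self-avoiding-walk tree T_SAW(v) is at most b. Then for every positive integer j and every vertex v, the number of vertices within distance j·a of v in T_SAW(v) is at most b^j. -/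
/-- The number of vertices of the self-avoiding-walk tree `T_SAW(v)` within distance `r`
of its root, i.e. the number of walks from `v` of length at most `r` that do not repeat
a vertex except possibly at the terminal vertex. -/
noncomputable def sawCount {V : Type} (G : SimpleGraph V) (v : V) (r : ℕ) : ℕ :=
  Nat.card {p : Σ u : V, G.Walk v u // p.2.length ≤ r ∧ p.2.support.dropLast.Nodup}

open SimpleGraph Walk

namespace SAWAux

variable {V : Type} {G : SimpleGraph V}

/-- Set of self-avoiding walks (terminal repeats allowed) of length at most `r` from `v`. -/
def SA (G : SimpleGraph V) (v : V) (r : ℕ) : Set (Σ u : V, G.Walk v u) :=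
  {p | p.2.length ≤ r ∧ p.2.support.dropLast.Nodup}

lemma sawCount_eq (v : V) (r : ℕ) : sawCount G v r = Nat.card (SA G v r) := rfl

lemma dropLast_support_append {u v w : V} (p : G.Walk u v) (q : G.Walk v w) :
    (p.append q).support.dropLast = p.support.dropLast ++ q.support.dropLast := by
  induction p with
  | nil => simp
  | cons h p ih =>
    rw [Walk.cons_append, Walk.support_cons, Walk.support_cons,
      List.dropLast_cons_of_ne_nil (Walk.support_ne_nil _),
      List.dropLast_cons_of_ne_nil (Walk.support_ne_nil _), ih, List.cons_append]

lemma append_cancel {u v w : V} {p : G.Walk u v} {q q' : G.Walk v w}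
    (h : p.append q = p.append q') : q = q' := by
  induction p with
  | nil => simpa using h
  | cons ha p ih =>
    rw [Walk.cons_append, Walk.cons_append] at h
    injection h with h1 h2 h3 h4
    exact ih h4

lemma split_first_hit (d : V → Prop) [DecidablePred d] :
    ∀ {u w : V} (p : G.Walk u w), ¬ d u → (∃ x ∈ p.support.dropLast, d x) →
    ∃ (z : V) (q : G.Walk u z) (r : G.Walk z w), q.append r = p ∧ d z ∧
      (∀ x ∈ q.support.dropLast, ¬ d x) ∧ q.length < p.length := by
  intro u w p
  induction p with
  | nil => intro _ hx; simp at hx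
  | @cons u x w ha p ih =>
    intro hu hx
    have hdl : (Walk.cons ha p).support.dropLast = u :: p.support.dropLast := by
      rw [Walk.support_cons, List.dropLast_cons_of_ne_nil (Walk.support_ne_nil _)]
    by_cases hdx : d x
    · have hplen : 0 < p.length := by
        rcases hx with ⟨y, hy, hdy⟩
        rw [hdl] at hy
        rcases List.mem_cons.mp hy with hy | hy
        · exact absurd hdy (hy ▸ hu)
        · have : p.support.dropLast.length = p.length := by
            rw [List.length_dropLast, Walk.length_support]; omega
          have := List.length_pos_of_mem hy
          omega
      refine ⟨x, Walk.cons ha Walk.nil, p, by simp, hdx, ?_, by simp; omega⟩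
      intro y hy
      simp only [Walk.support_cons, Walk.support_nil] at hy
      simp at hy
      exact hy ▸ hu
    · have hx' : ∃ y ∈ p.support.dropLast, d y := by
        rcases hx with ⟨y, hy, hdy⟩
        rw [hdl] at hy
        rcases List.mem_cons.mp hy with hy | hy
        · exact absurd hdy (hy ▸ hu)
        · exact ⟨y, hy, hdy⟩
      obtain ⟨z, q, r, happ, hz, hq, hlen⟩ := ih hdx hx'
      refine ⟨z, Walk.cons ha q, r, by rw [Walk.cons_append, happ], hz, ?_, by simp; omega⟩
      intro y hy
      rw [Walk.support_cons, List.dropLast_cons_of_ne_nil (Walk.support_ne_nil _)] at hy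
      rcases List.mem_cons.mp hy with hy | hy
      · exact hy ▸ hu
      · exact hq y hy

/-- Initial segment of a walk. -/
def takeW {u v : V} : (p : G.Walk u v) → (n : ℕ) → G.Walk u (p.getVert n)
  | .nil, _ => .nil
  | .cons _ _, 0 => .nil
  | .cons h q, (n + 1) => Walk.cons h (takeW q n)

lemma takeW_append_drop {u v : V} (p : G.Walk u v) (n : ℕ) :
    (takeW p n).append (p.drop n) = p := by
  induction p generalizing n with
  | nil => cases n <;> rfl
  | cons h q ih =>
    cases n with
    | zero => rfl
    | succ n => exact congrArg (Walk.cons h) (ih n)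

lemma length_takeW {u v : V} (p : G.Walk u v) (n : ℕ) :
    (takeW p n).length = min n p.length := by
  induction p generalizing n with
  | nil => cases n <;> simp [takeW]
  | cons h q ih =>
    cases n with
    | zero => simp [takeW]; rfl
    | succ n => simp [takeW, ih n, Walk.length_cons]

lemma length_drop {u v : V} (p : G.Walk u v) (n : ℕ) :
    (p.drop n).length = p.length - n := by
  induction p generalizing n with
  | nil => cases n <;> simp [Walk.drop]
  | cons h q ih =>
    cases n with
    | zero => simp [Walk.drop]
    | succ n => simp [Walk.drop, Walk.length_copy, ih n, Walk.length_cons]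

lemma copy_heq {u v u' v' : V} (p : G.Walk u v) (h1 : u = u') (h2 : v = v') :
    HEq (p.copy h1 h2) p := by subst h1; subst h2; rw [Walk.copy_rfl_rfl]

lemma reconstruct {v x1 x2 w1 w2 : V} (t1 : G.Walk v x1) (t2 : G.Walk v x2)
    (d1 : G.Walk x1 w1) (d2 : G.Walk x2 w2) (hx : x1 = x2) (ht : HEq t1 t2)
    (hw : w1 = w2) (hd : HEq d1 d2) :
    (⟨w1, t1.append d1⟩ : Σ y, G.Walk v y) = ⟨w2, t2.append d2⟩ := by
  subst hx; subst hw
  rw [heq_iff_eq] at ht hd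
  subst ht; subst hd; rfl

lemma exists_infinite_fiber' {α β : Type*} {S : Set α} (hS : S.Infinite) (f : α → β)
    {T : Set β} (hT : T.Finite) (hmap : ∀ a ∈ S, f a ∈ T) :
    ∃ t ∈ T, {a ∈ S | f a = t}.Infinite := by
  by_contra hc
  push_neg at hc
  have hsub : S ⊆ ⋃ t ∈ T, {a ∈ S | f a = t} := fun x hx =>
    Set.mem_biUnion (hmap x hx) ⟨hx, rfl⟩
  exact hS ((hT.biUnion (fun t ht => hc t ht)).subset hsub)

lemma lemA (a L : ℕ) :
    ∀ (n : ℕ) (v u : V) (q : G.Walk v u), q.length = n → q.length ≤ L →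
      q.support.dropLast.Nodup → (SA G u a).Infinite → (SA G v (L + a)).Infinite := by
  intro n
  induction n using Nat.strong_induction_on with
  | _ n IH =>
  intro v u q hqn hqL hqnod hSu
  classical
  have hDlen : q.support.dropLast.length = q.length := by
    rw [List.length_dropLast, Walk.length_support]; omega
  have key : ∀ z0 ∈ q.support.dropLast, (SA G z0 a).Infinite → (SA G v (L + a)).Infinite := by
    intro z0 hz0 hSz
    have hqpos : 0 < q.length := by
      have h1 := List.length_pos_of_mem hz0; omega
    obtain ⟨q1, hnod1, hlt⟩ :
        ∃ (q1 : G.Walk v z0), q1.support.dropLast.Nodup ∧ q1.length < q.length := by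
      by_cases hzv : z0 = v
      · subst hzv; exact ⟨Walk.nil, by simp, by simpa using hqpos⟩
      · obtain ⟨z, q1, r, happ, hz, hq1d, hlen⟩ :=
          split_first_hit (· = z0) q (fun hh => hzv hh.symm) ⟨z0, hz0, rfl⟩
        subst hz
        refine ⟨q1, ?_, hlen⟩
        have hdl := dropLast_support_append q1 r
        rw [happ] at hdl
        exact (List.nodup_append'.mp (hdl ▸ hqnod)).1
    exact IH q1.length (by omega) v z0 q1 rfl (by omega) hnod1 hSz
  by_cases hu : u ∈ q.support.dropLast
  · exact key u hu hSu
  · set D := q.support.dropLast with hD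
    set Good : Set (Σ w : V, G.Walk u w) :=
      {s | s ∈ SA G u a ∧ ∀ x ∈ s.2.support.dropLast, x ∉ D} with hGood
    by_cases hg : Good.Infinite
    · have hinj : Set.InjOn (fun s : (Σ w : V, G.Walk u w) =>
          (⟨s.1, q.append s.2⟩ : Σ w : V, G.Walk v w)) Good := by
        rintro ⟨w1, s1⟩ - ⟨w2, s2⟩ - heq
        simp only at heq
        injection heq with h1 h2
        subst h1
        rw [heq_iff_eq] at h2
        exact congrArg (Sigma.mk w1) (append_cancel h2)
      have himg : (fun s : (Σ w : V, G.Walk u w) =>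
          (⟨s.1, q.append s.2⟩ : Σ w : V, G.Walk v w)) '' Good ⊆ SA G v (L + a) := by
        rintro - ⟨⟨w1, s1⟩, ⟨⟨hlen, hnod⟩, hdisj⟩, rfl⟩
        refine ⟨?_, ?_⟩
        · rw [Walk.length_append]; omega
        · rw [dropLast_support_append, List.nodup_append']
          exact ⟨hqnod, hnod, fun x hxq hxs => hdisj x hxs hxq⟩
      exact (hg.image hinj).mono himg
    · have hbad : (SA G u a \ Good).Infinite := hSu.diff (Set.not_infinite.mp hg)
      set Bad := SA G u a \ Good with hBad
      have hsplit : ∀ s : ↥Bad, ∃ (z : V) (π : G.Walk u z) (r : G.Walk z s.1.1),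
          π.append r = s.1.2 ∧ z ∈ D ∧ (∀ x ∈ π.support.dropLast, x ∉ D) ∧
          π.length < s.1.2.length := by
        rintro ⟨⟨w, s⟩, hmem, hng⟩
        have hx : ∃ x ∈ s.support.dropLast, x ∈ D := by
          by_contra hcon
          push_neg at hcon
          exact hng ⟨hmem, hcon⟩
        exact split_first_hit (· ∈ D) s hu hx
      choose zf πf rf happ hzD hπD hπlen using hsplit
      have hBinf : Infinite ↥Bad := hbad.to_subtype
      obtain ⟨z0, hz0D, hP⟩ := exists_infinite_fiber' (Set.infinite_univ (α := ↥Bad)) zf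
        (D.finite_toSet) (fun s _ => hzD s)
      set Pi : ↥Bad → (Σ x : V, G.Walk u x) := fun s => ⟨zf s, πf s⟩ with hPi
      have hslen : ∀ s : ↥Bad, s.1.2.length ≤ a := fun s => s.2.1.1
      have hsnod : ∀ s : ↥Bad, s.1.2.support.dropLast.Nodup := fun s => s.2.1.2
      have hdecomp : ∀ s : ↥Bad,
          s.1.2.support.dropLast = (πf s).support.dropLast ++ (rf s).support.dropLast := by
        intro s
        rw [← happ s, dropLast_support_append]
      have hrlen : ∀ s : ↥Bad, (rf s).length ≤ a := by
        intro s
        have h1 := hπlen s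
        have h2 := hslen s
        have h3 : (πf s).length + (rf s).length = s.1.2.length := by
          rw [← happ s, Walk.length_append]
        omega
      set P : Set ↥Bad := {s ∈ Set.univ | zf s = z0} with hPdef
      by_cases hPi' : (Pi '' P).Infinite
      · have hinj : Set.InjOn (fun t : (Σ x : V, G.Walk u x) =>
            (⟨t.1, q.append t.2⟩ : Σ x : V, G.Walk v x)) (Pi '' P) := by
          rintro ⟨x1, π1⟩ - ⟨x2, π2⟩ - heq
          simp only at heq
          injection heq with h1 h2
          subst h1
          rw [heq_iff_eq] at h2
          exact congrArg (Sigma.mk x1) (append_cancel h2)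
        have himg : (fun t : (Σ x : V, G.Walk u x) =>
            (⟨t.1, q.append t.2⟩ : Σ x : V, G.Walk v x)) '' (Pi '' P) ⊆ SA G v (L + a) := by
          rintro - ⟨-, ⟨s, hsP, rfl⟩, rfl⟩
          refine ⟨?_, ?_⟩
          · rw [Walk.length_append]
            have h1 := hπlen s; have h2 := hslen s
            have h3 : (Pi s).2.length = (πf s).length := rfl; omega
          · simp only [hPi]
            rw [dropLast_support_append, List.nodup_append']
            refine ⟨hqnod, ?_, ?_⟩
            · exact (List.nodup_append'.mp ((hdecomp s) ▸ hsnod s)).1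
            · intro x hxq hxπ
              exact hπD s x hxπ hxq
        exact (hPi'.image hinj).mono himg
      · obtain ⟨t, htmem, hF⟩ := exists_infinite_fiber' hP Pi (Set.not_infinite.mp hPi')
          (fun s hs => Set.mem_image_of_mem Pi hs)
        set g : ↥Bad → (Σ x : V, G.Walk z0 x) := fun s =>
          if hzs : zf s = z0 then ⟨s.1.1, (rf s).copy hzs rfl⟩ else ⟨z0, Walk.nil⟩ with hg
        have hginj : Set.InjOn g {s ∈ P | Pi s = t} := by
          rintro s ⟨⟨-, hz1⟩, ht1⟩ s' ⟨⟨-, hz2⟩, ht2⟩ heq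
          simp only [hg, dif_pos hz1, dif_pos hz2] at heq
          injection heq with hw hr
          have hrr : HEq (rf s) (rf s') :=
            ((copy_heq (rf s) hz1 rfl).symm.trans hr).trans (copy_heq (rf s') hz2 rfl)
          have hπeq : Pi s = Pi s' := ht1.trans ht2.symm
          simp only [hPi] at hπeq
          injection hπeq with hz hπ
          have hs1 : s.1 = s'.1 := by
            have hrec := reconstruct (πf s) (πf s') (rf s) (rf s') hz hπ hw hrr
            rw [happ s, happ s'] at hrec
            exact hrec
          exact Subtype.ext hs1
        have himg : g '' {s ∈ P | Pi s = t} ⊆ SA G z0 a := by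
          rintro - ⟨s, ⟨⟨-, hz1⟩, -⟩, rfl⟩
          simp only [hg, dif_pos hz1]
          refine ⟨?_, ?_⟩
          · rw [Walk.length_copy]; exact hrlen s
          · rw [Walk.support_copy]
            exact (List.nodup_append'.mp ((hdecomp s) ▸ hsnod s)).2.1
        exact key z0 hz0D ((hF.image hginj).mono himg)

lemma heq_of_fiber_eq {V' : Type} {γ : V' → Type} {β : Type} (f : ∀ m, γ m → β)
    (C : V' → Prop) (hinj : ∀ m, C m → Function.Injective (f m)) {m1 m2 : V'} (E : m1 = m2)
    (hc : C m1) {d1 : γ m1} {d2 : γ m2} (he : f m1 d1 = f m2 d2) : HEq d1 d2 := by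
  subst E; exact heq_of_eq (hinj m1 hc he)

lemma heq_subtype_elim {m1 m2 : V} {a : ℕ} (E : m1 = m2)
    {x : ↥(SA G m1 a)} {y : ↥(SA G m2 a)} (h : HEq x y) :
    x.1.1 = y.1.1 ∧ HEq x.1.2 y.1.2 := by
  subst E; rw [heq_iff_eq] at h; subst h; exact ⟨rfl, HEq.rfl⟩

end SAWAux

/-- If for every vertex `v` the self-avoiding-walk tree `T_SAW(v)` has at
most `b` vertices within distance `a` of the root, then for every positive integer `j`
it has at most `b^j` vertices within distance `j·a` of the root. -/
theorem stmt6 {V : Type} (G : SimpleGraph V) (a b : ℕ)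
    (h : ∀ v : V, sawCount G v a ≤ b) :
    ∀ (j : ℕ), 0 < j → ∀ v : V, sawCount G v (j * a) ≤ b ^ j := by
  classical
  intro j hj
  induction j, hj using Nat.le_induction with
  | base => intro v; simpa using h v
  | succ j hj IH =>
    intro v
    rw [SAWAux.sawCount_eq, show (j + 1) * a = j * a + a from by ring]
    by_cases hA : (SAWAux.SA G v (j * a + a)).Infinite
    · have := hA.to_subtype
      simp [Nat.card_eq_zero_of_infinite]
    · have hAfin : (SAWAux.SA G v (j * a + a)).Finite := Set.not_infinite.mp hA
      rcases Nat.eq_zero_or_pos b with hb0 | hb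
      · exfalso
        have h0 : Nat.card ↥(SAWAux.SA G v a) = 0 := by
          have hv := h v; rw [SAWAux.sawCount_eq] at hv; omega
        have hne : Nonempty ↥(SAWAux.SA G v a) :=
          ⟨⟨⟨v, Walk.nil⟩, by exact ⟨by simp, by simp⟩⟩⟩
        rcases Nat.card_eq_zero.mp h0 with hemp | hinf
        · exact hemp.false hne.some
        · have hinf' : (SAWAux.SA G v a).Infinite := Set.infinite_coe_iff.mp hinf
          exact hA (hinf'.mono (fun p hp => ⟨hp.1.trans (Nat.le_add_left a (j * a)), hp.2⟩))
      · have hembex : ∀ m : V, ∃ f : ↥(SAWAux.SA G m a) → Fin b,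
            (SAWAux.SA G m a).Finite → Function.Injective f := by
          intro m
          by_cases hf : (SAWAux.SA G m a).Finite
          · have : Finite ↥(SAWAux.SA G m a) := hf.to_subtype
            have hcard : Nat.card ↥(SAWAux.SA G m a) ≤ b := by
              rw [← SAWAux.sawCount_eq]; exact h m
            refine ⟨(Fin.castLE hcard) ∘ (Finite.equivFin _), fun _ => ?_⟩
            exact (Fin.castLE_injective hcard).comp (Equiv.injective _)
          · exact ⟨fun _ => ⟨0, hb⟩, fun hf' => absurd hf' hf⟩
        choose emb hembinj using hembex
        set L := j * a with hL
        have hQsub : SAWAux.SA G v L ⊆ SAWAux.SA G v (L + a) := fun p hp =>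
          ⟨hp.1.trans (Nat.le_add_right _ _), hp.2⟩
        have hQfin : (SAWAux.SA G v L).Finite := hAfin.subset hQsub
        have hmemQ : ∀ p : ↥(SAWAux.SA G v (L + a)),
            (⟨p.1.2.getVert L, SAWAux.takeW p.1.2 L⟩ : Σ u : V, G.Walk v u)
              ∈ SAWAux.SA G v L := by
          rintro ⟨⟨w, pw⟩, hlen, hnod⟩
          refine ⟨by rw [SAWAux.length_takeW]; exact min_le_left _ _, ?_⟩
          have hdec : pw.support.dropLast
              = (SAWAux.takeW pw L).support.dropLast ++ (pw.drop L).support.dropLast := by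
            rw [← SAWAux.dropLast_support_append, SAWAux.takeW_append_drop]
          exact (List.nodup_append.mp (hdec ▸ hnod)).1
        have hmemS : ∀ p : ↥(SAWAux.SA G v (L + a)),
            (⟨p.1.1, p.1.2.drop L⟩ : Σ u : V, G.Walk (p.1.2.getVert L) u)
              ∈ SAWAux.SA G (p.1.2.getVert L) a := by
          rintro ⟨⟨w, pw⟩, hlen, hnod⟩
          have hlen' : pw.length ≤ L + a := hlen
          refine ⟨by show (pw.drop L).length ≤ a; rw [SAWAux.length_drop]; omega, ?_⟩
          have hdec : pw.support.dropLast
              = (SAWAux.takeW pw L).support.dropLast ++ (pw.drop L).support.dropLast := by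
            rw [← SAWAux.dropLast_support_append, SAWAux.takeW_append_drop]
          exact (List.nodup_append.mp (hdec ▸ hnod)).2.1
        have hSfin : ∀ p : ↥(SAWAux.SA G v (L + a)),
            (SAWAux.SA G (p.1.2.getVert L) a).Finite := by
          intro p
          by_contra hinf
          exact hA (SAWAux.lemA a L (SAWAux.takeW p.1.2 L).length v _ (SAWAux.takeW p.1.2 L)
            rfl (by rw [SAWAux.length_takeW]; exact min_le_left _ _) (hmemQ p).2 hinf)
        have hΦinj : Function.Injective (fun p : ↥(SAWAux.SA G v (L + a)) =>
            ((⟨⟨p.1.2.getVert L, SAWAux.takeW p.1.2 L⟩, hmemQ p⟩ : ↥(SAWAux.SA G v L)),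
             emb (p.1.2.getVert L) ⟨⟨p.1.1, p.1.2.drop L⟩, hmemS p⟩)) := by
          rintro ⟨⟨w, pw⟩, hp⟩ ⟨⟨w', pw'⟩, hp'⟩ heq
          simp only [Prod.mk.injEq] at heq
          obtain ⟨h1, h2⟩ := heq
          have h1' := Subtype.ext_iff.mp h1
          injection h1' with hE hT
          have hd := SAWAux.heq_of_fiber_eq emb (fun m => (SAWAux.SA G m a).Finite)
            (fun m hc => hembinj m hc) hE (hSfin ⟨⟨w, pw⟩, hp⟩) h2
          obtain ⟨hw, hD⟩ := SAWAux.heq_subtype_elim (G := G) (a := a) hE hd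
          have hrec := SAWAux.reconstruct (SAWAux.takeW pw L) (SAWAux.takeW pw' L)
            (pw.drop L) (pw'.drop L) hE hT hw hD
          rw [SAWAux.takeW_append_drop, SAWAux.takeW_append_drop] at hrec
          exact Subtype.ext hrec
        have hfinQ : Finite ↥(SAWAux.SA G v L) := hQfin.to_subtype
        have hle := Nat.card_le_card_of_injective _ hΦinj
        calc Nat.card ↥(SAWAux.SA G v (L + a))
            ≤ Nat.card (↥(SAWAux.SA G v L) × Fin b) := hle
          _ = Nat.card ↥(SAWAux.SA G v L) * b := by
              rw [Nat.card_prod]; simp [Nat.card_eq_fintype_card]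
          _ ≤ b ^ j * b := Nat.mul_le_mul_right b
              (by have := IH v; rwa [SAWAux.sawCount_eq] at this)
          _ = b ^ (j + 1) := (pow_succ b j).symm
end
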